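/- Let A and B be real n×n stable matrices with A − B of rank one. Then there exist nonzero vectors v, w ∈ ℝⁿ with A·v·vᵀ + v·vᵀ·Aᵀ + B·w·wᵀ + w·wᵀ·Bᵀ = 0 if and only if the matrix A·B has a real negative eigenvalue, i.e. there exist a real λ < 0 and a nonzero x ∈ ℝⁿ with A·B·x = λ·x. -/

import Mathlib

open Matrix

/-- A real square matrix is *stable* if every eigenvalue (over ℂ) has negative real part. -/
def IsStable {n : ℕ} (A : Matrix (Fin n) (Fin n) ℝ) : Prop :=
  ∀ μ : ℂ, μ ∈ spectrum ℂ (A.map (algebraMap ℝ ℂ)) → μ.re < 0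

namespace RankOneAux

open Polynomial Filter

variable {n : ℕ}

lemma vecMulVec_mulVec (a b z : Fin n → ℝ) :
    vecMulVec a b *ᵥ z = (b ⬝ᵥ z) • a := by
  ext i
  simp only [mulVec, dotProduct, vecMulVec_apply, Pi.smul_apply, smul_eq_mul, Finset.sum_mul]
  exact Finset.sum_congr rfl fun j _ => by ring

lemma mul_vecMulVec (A : Matrix (Fin n) (Fin n) ℝ) (v w : Fin n → ℝ) :
    A * vecMulVec v w = vecMulVec (A *ᵥ v) w := by
  ext i j
  simp only [mul_apply, vecMulVec_apply, mulVec, dotProduct, Finset.sum_mul]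
  exact Finset.sum_congr rfl fun k _ => by ring

lemma vecMulVec_mul_transpose (A : Matrix (Fin n) (Fin n) ℝ) (v w : Fin n → ℝ) :
    vecMulVec v w * Aᵀ = vecMulVec v (A *ᵥ w) := by
  ext i j
  simp only [mul_apply, vecMulVec_apply, mulVec, dotProduct, transpose_apply, Finset.mul_sum]
  exact Finset.sum_congr rfl fun k _ => by ring

lemma vecMulVec_smul_left (c : ℝ) (a b : Fin n → ℝ) :
    vecMulVec (c • a) b = c • vecMulVec a b := by
  ext i j; simp [vecMulVec_apply, mul_assoc]

lemma vecMulVec_smul_right (c : ℝ) (a b : Fin n → ℝ) :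
    vecMulVec a (c • b) = c • vecMulVec a b := by
  ext i j; simp [vecMulVec_apply]; ring

lemma cancel_aux (β : ℝ) (u v : Fin n → ℝ) :
    vecMulVec (β • u) v + vecMulVec v (β • u) + vecMulVec ((-β) • v) u
      + vecMulVec u ((-β) • v) = 0 := by
  rw [vecMulVec_smul_left, vecMulVec_smul_right, vecMulVec_smul_left, vecMulVec_smul_right,
    neg_smul, neg_smul]
  abel

lemma det_smul_one_sub_ne_zero {A : Matrix (Fin n) (Fin n) ℝ} (hA : IsStable A)
    {t : ℝ} (ht : 0 ≤ t) : (t • (1 : Matrix (Fin n) (Fin n) ℝ) - A).det ≠ 0 := by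
  intro h
  have h2 : (((t • (1 : Matrix (Fin n) (Fin n) ℝ) - A)).map (algebraMap ℝ ℂ)).det = 0 := by
    rw [show (t • (1 : Matrix (Fin n) (Fin n) ℝ) - A).map ⇑(algebraMap ℝ ℂ)
        = (algebraMap ℝ ℂ).mapMatrix (t • (1 : Matrix (Fin n) (Fin n) ℝ) - A) from rfl,
      ← RingHom.map_det, h, map_zero]
  have h3 : ((t : ℂ) • (1 : Matrix (Fin n) (Fin n) ℂ) - A.map (algebraMap ℝ ℂ)).det = 0 := by
    rw [← h2]
    congr 1
    ext i j
    by_cases hij : i = j <;>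
      simp [Matrix.map_apply, Matrix.one_apply, hij, Matrix.smul_apply, Matrix.sub_apply]
  have hmem : (t : ℂ) ∈ spectrum ℂ (A.map (algebraMap ℝ ℂ)) := by
    rw [spectrum.mem_iff, Algebra.algebraMap_eq_smul_one]
    rw [Matrix.isUnit_iff_isUnit_det, isUnit_iff_ne_zero]
    simp only [ne_eq, not_not]
    exact h3
  have := hA _ hmem
  rw [Complex.ofReal_re] at this
  linarith

lemma eval_charpoly' (A : Matrix (Fin n) (Fin n) ℝ) (t : ℝ) :
    A.charpoly.eval t = (t • (1 : Matrix (Fin n) (Fin n) ℝ) - A).det := by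
  rw [Matrix.charpoly]
  rw [show (Matrix.charmatrix A).det.eval t = (evalRingHom t) (Matrix.charmatrix A).det from rfl]
  rw [RingHom.map_det]
  congr 1
  ext i j
  by_cases hij : i = j <;>
    simp [Matrix.charmatrix_apply, Matrix.map_apply, hij, Matrix.one_apply,
      Matrix.diagonal_apply, Matrix.smul_apply, Matrix.sub_apply]

lemma det_sign_pos {A : Matrix (Fin n) (Fin n) ℝ} (hA : IsStable A) (hn : 0 < n) :
    0 < (-1 : ℝ) ^ n * A.det := by
  have hne : ∀ t : ℝ, 0 ≤ t → A.charpoly.eval t ≠ 0 := by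
    intro t ht
    rw [eval_charpoly']
    exact det_smul_one_sub_ne_zero hA ht
  have hnd : A.charpoly.natDegree = n := by
    simp [Matrix.charpoly_natDegree_eq_dim A]
  have hdeg : 0 < A.charpoly.degree :=
    Polynomial.natDegree_pos_iff_degree_pos.mp (by rw [hnd]; exact hn)
  have hmono := A.charpoly_monic
  have htend : Tendsto (fun x => A.charpoly.eval x) atTop atTop :=
    Polynomial.tendsto_atTop_of_leadingCoeff_nonneg _ hdeg (by rw [hmono.leadingCoeff]; norm_num)
  obtain ⟨M, hM⟩ := (htend.eventually_ge_atTop 1).exists_forall_of_atTop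
  set M' := max M 0 with hM'
  have hevalM : 1 ≤ A.charpoly.eval M' := hM _ (le_max_left _ _)
  have h0 : A.charpoly.eval 0 ≠ 0 := hne 0 le_rfl
  have hpos : 0 < A.charpoly.eval 0 := by
    rcases lt_or_gt_of_ne h0 with hlt | hgt
    · exfalso
      have hcont : ContinuousOn (fun x => A.charpoly.eval x) (Set.Icc 0 M') :=
        (Polynomial.continuous A.charpoly).continuousOn
      have hmem : (0:ℝ) ∈ Set.Icc (A.charpoly.eval 0) (A.charpoly.eval M') :=
        ⟨hlt.le, by linarith⟩
      obtain ⟨c, hc, hc0⟩ := intermediate_value_Icc (le_max_right M 0) hcont hmem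
      exact hne c hc.1 hc0
    · exact hgt
  have heval0 : A.charpoly.eval 0 = (-1:ℝ)^n * A.det := by
    rw [eval_charpoly']
    simp [Matrix.det_neg]
  rw [← heval0]
  exact hpos

lemma exists_eq_vecMulVec {M : Matrix (Fin n) (Fin n) ℝ} (h : M.rank = 1) :
    ∃ p q : Fin n → ℝ, M = vecMulVec p q := by
  rw [Matrix.rank, finrank_eq_one_iff'] at h
  obtain ⟨⟨p, hp_mem⟩, hp0, hspan⟩ := h
  choose c hc using fun x : Fin n → ℝ =>
    hspan ⟨M.mulVecLin x, LinearMap.mem_range_self _ x⟩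
  refine ⟨p, fun j => c (Pi.single j 1), ?_⟩
  ext i j
  have h2 : c (Pi.single j 1) • p = M *ᵥ Pi.single j 1 :=
    congrArg Subtype.val (hc (Pi.single j 1))
  have h3 := congrFun h2 i
  simp only [Pi.smul_apply, smul_eq_mul, Matrix.mulVec_single_one, mul_one] at h3
  rw [vecMulVec_apply, mul_comm]
  exact h3.symm

lemma det_add_vecMulVec {B : Matrix (Fin n) (Fin n) ℝ} (hB : IsUnit B.det)
    (p q : Fin n → ℝ) :
    (B + vecMulVec p q).det = B.det * (1 + q ⬝ᵥ (B⁻¹ *ᵥ p)) := by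
  rw [vecMulVec_eq Unit, Matrix.det_add_replicateCol_mul_replicateRow hB]
  congr 1
  rw [Matrix.det_unique]
  simp only [Matrix.add_apply, Matrix.one_apply_eq, Matrix.mul_apply, Matrix.replicateRow_apply,
    Matrix.replicateCol_apply, dotProduct, Matrix.mulVec, Finset.univ_unique, Finset.sum_mul,
    Finset.mul_sum]
  congr 1
  rw [Finset.sum_comm]
  exact Finset.sum_congr rfl fun k _ => Finset.sum_congr rfl fun l _ => by ring

end RankOneAux

open RankOneAux

/-- For stable `A`, `B` with `A - B` of rank one: nonzero `v`, `w` with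
`A·v·vᵀ + v·vᵀ·Aᵀ + B·w·wᵀ + w·wᵀ·Bᵀ = 0` exist iff `A·B` has a real negative eigenvalue. -/
theorem rank_one_intersection_iff_neg_eigenvalue {n : ℕ} (A B : Matrix (Fin n) (Fin n) ℝ)
    (hA : IsStable A) (hB : IsStable B) (hrank : (A - B).rank = 1) :
    (∃ (v w : Fin n → ℝ), v ≠ 0 ∧ w ≠ 0 ∧
        A * vecMulVec v v + vecMulVec v v * Aᵀ + B * vecMulVec w w + vecMulVec w w * Bᵀ = 0) ↔
      ∃ lam : ℝ, lam < 0 ∧ ∃ x : Fin n → ℝ, x ≠ 0 ∧ (A * B).mulVec x = lam • x := by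
  classical
  have hn : 0 < n := by
    rcases Nat.eq_zero_or_pos n with h0 | h; swap
    · exact h
    · exfalso
      subst h0
      have := (A - B).rank_le_card_width
      simp at this
      omega
  have hsA := det_sign_pos hA hn
  have hsB := det_sign_pos hB hn
  have hdetA : A.det ≠ 0 := by
    intro h; rw [h, mul_zero] at hsA; exact lt_irrefl 0 hsA
  have hdetB : B.det ≠ 0 := by
    intro h; rw [h, mul_zero] at hsB; exact lt_irrefl 0 hsB
  have hBunit : IsUnit B.det := isUnit_iff_ne_zero.mpr hdetB
  constructor
  · rintro ⟨v, w, hv, hw, heq⟩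
    rw [mul_vecMulVec, vecMulVec_mul_transpose, mul_vecMulVec, vecMulVec_mul_transpose] at heq
    set a := A *ᵥ v with ha
    set b := B *ᵥ w with hb
    by_cases hpar : ∃ t : ℝ, w = t • v
    · -- parallel case : contradiction with signs of determinants
      exfalso
      obtain ⟨t, htw⟩ := hpar
      have ht0 : t ≠ 0 := by
        rintro rfl
        rw [zero_smul] at htw
        exact hw htw
      set u : Fin n → ℝ := a + (t^2) • (B *ᵥ v) with hu
      have hkey2 : ∀ i j, u i * v j + v i * u j = 0 := by
        intro i j
        have h1 := congrFun (congrFun heq i) j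
        have hbv : b = t • (B *ᵥ v) := by rw [hb, htw, Matrix.mulVec_smul]
        simp only [Matrix.add_apply, vecMulVec_apply, Matrix.zero_apply, htw, hbv,
          Pi.smul_apply, smul_eq_mul, hu, Pi.add_apply] at h1 ⊢
        nlinarith [h1]
      obtain ⟨j0, hj0⟩ := Function.ne_iff.mp hv
      have hvj0 : v j0 ≠ 0 := by simpa using hj0
      have hu_j0 : u j0 = 0 := by
        have := hkey2 j0 j0
        have h2 : 2 * (u j0 * v j0) = 0 := by linarith
        have h3 : u j0 * v j0 = 0 := by linarith
        rcases mul_eq_zero.mp h3 with h | h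
        · exact h
        · exact absurd h hvj0
      have hu0 : u = 0 := by
        funext i
        have := hkey2 i j0
        rw [hu_j0, mul_zero, add_zero] at this
        rcases mul_eq_zero.mp this with h | h
        · exact h
        · exact absurd h hvj0
      have hAv : (A + t^2 • B) *ᵥ v = 0 := by
        rw [Matrix.add_mulVec, Matrix.smul_mulVec]
        exact hu0
      have hdet0 : (A + t^2 • B).det = 0 :=
        Matrix.exists_mulVec_eq_zero_iff.mp ⟨v, hv, hAv⟩
      obtain ⟨p, q, hpq⟩ := exists_eq_vecMulVec hrank
      have hA_eq : A = B + vecMulVec p q := by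
        rw [← hpq]; abel
      set r : ℝ := q ⬝ᵥ (B⁻¹ *ᵥ p) with hr
      have hs : (1 + t^2) ≠ 0 := by positivity
      have hsmulB : ((1 : ℝ) + t^2) • B = B + t^2 • B := by
        rw [add_smul, one_smul]
      have hrewrite : A + t^2 • B = (1 + t^2) • (B + vecMulVec ((1 + t^2)⁻¹ • p) q) := by
        rw [hA_eq, smul_add, vecMulVec_smul_left, smul_smul, mul_inv_cancel₀ hs, one_smul,
          hsmulB]
        abel
      have hdot : q ⬝ᵥ (B⁻¹ *ᵥ ((1 + t^2)⁻¹ • p)) = (1 + t^2)⁻¹ * r := by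
        rw [Matrix.mulVec_smul, dotProduct_smul, hr, smul_eq_mul]
      have hdet1 : (0:ℝ) = (1 + t^2)^n * (B.det * (1 + (1 + t^2)⁻¹ * r)) := by
        rw [← hdet0, hrewrite, Matrix.det_smul, det_add_vecMulVec hBunit, hdot]
        simp
      have hpown : (1 + t^2)^n ≠ 0 := pow_ne_zero _ hs
      have hfac : 1 + (1 + t^2)⁻¹ * r = 0 := by
        rcases mul_eq_zero.mp hdet1.symm with h | h
        · exact absurd h hpown
        · rcases mul_eq_zero.mp h with h' | h'
          · exact absurd h' hdetB
          · exact h'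
      have hrval : r = -(1 + t^2) := by
        field_simp at hfac
        linarith
      have hdetA_eq : A.det = B.det * (-(t^2)) := by
        rw [hA_eq, det_add_vecMulVec hBunit, ← hr, hrval]
        ring
      rw [hdetA_eq] at hsA
      have ht2 : 0 < t^2 := by positivity
      nlinarith [hsA, hsB]
    · -- independent case : produce the negative eigenvalue
      push_neg at hpar
      have hwne : w ⬝ᵥ w ≠ 0 := fun h => hw (dotProduct_self_eq_zero.mp h)
      have hcomm : w ⬝ᵥ v = v ⬝ᵥ w := dotProduct_comm w v
      set g : ℝ := (v ⬝ᵥ v) * (w ⬝ᵥ w) - (v ⬝ᵥ w)^2 with hg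
      have hgne : g ≠ 0 := by
        intro hg0
        have huu : ((w ⬝ᵥ w) • v - (v ⬝ᵥ w) • w) ⬝ᵥ ((w ⬝ᵥ w) • v - (v ⬝ᵥ w) • w)
            = (w ⬝ᵥ w) * g := by
          rw [hg]
          simp only [sub_dotProduct, dotProduct_sub, smul_dotProduct, dotProduct_smul,
            smul_eq_mul, hcomm]
          ring
        have hu0 : (w ⬝ᵥ w) • v - (v ⬝ᵥ w) • w = 0 :=
          dotProduct_self_eq_zero.mp (by rw [huu, hg0, mul_zero])
        have hww_v : (w ⬝ᵥ w) • v = (v ⬝ᵥ w) • w := sub_eq_zero.mp hu0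
        by_cases hvw0 : (v ⬝ᵥ w) = 0
        · rw [hvw0, zero_smul] at hww_v
          rcases smul_eq_zero.mp hww_v with h | h
          · exact hwne h
          · exact hv h
        · have hkey : ((v ⬝ᵥ w)⁻¹ * (w ⬝ᵥ w)) • v = w := by
            rw [← smul_smul, hww_v, smul_smul, inv_mul_cancel₀ hvw0, one_smul]
          exact hpar _ hkey.symm
      set z₁ : Fin n → ℝ := g⁻¹ • ((w ⬝ᵥ w) • v - (v ⬝ᵥ w) • w) with hz₁
      set z₂ : Fin n → ℝ := g⁻¹ • ((v ⬝ᵥ v) • w - (v ⬝ᵥ w) • v) with hz₂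
      have hvz1 : v ⬝ᵥ z₁ = 1 := by
        have e : v ⬝ᵥ z₁ = g⁻¹ * g := by
          rw [hz₁, hg]
          simp only [dotProduct_smul, dotProduct_sub, smul_eq_mul]
          ring
        rw [e, inv_mul_cancel₀ hgne]
      have hwz1 : w ⬝ᵥ z₁ = 0 := by
        rw [hz₁]
        simp only [dotProduct_smul, dotProduct_sub, smul_eq_mul, hcomm]
        ring
      have hvz2 : v ⬝ᵥ z₂ = 0 := by
        rw [hz₂]
        simp only [dotProduct_smul, dotProduct_sub, smul_eq_mul, hcomm]
        ring
      have hwz2 : w ⬝ᵥ z₂ = 1 := by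
        have e : w ⬝ᵥ z₂ = g⁻¹ * g := by
          rw [hz₂, hg]
          simp only [dotProduct_smul, dotProduct_sub, smul_eq_mul, hcomm]
          ring
        rw [e, inv_mul_cancel₀ hgne]
      have hz : ∀ z : Fin n → ℝ,
          (v ⬝ᵥ z) • a + (a ⬝ᵥ z) • v + (w ⬝ᵥ z) • b + (b ⬝ᵥ z) • w = 0 := by
        intro z
        have h1 := congrArg (fun M => M *ᵥ z) heq
        simp only [Matrix.add_mulVec, RankOneAux.vecMulVec_mulVec, Matrix.zero_mulVec] at h1
        exact h1
      have E1 : a + (a ⬝ᵥ z₁) • v + (b ⬝ᵥ z₁) • w = 0 := by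
        have h1 := hz z₁
        rwa [hvz1, hwz1, one_smul, zero_smul, add_zero] at h1
      have E2 : (a ⬝ᵥ z₂) • v + b + (b ⬝ᵥ z₂) • w = 0 := by
        have h1 := hz z₂
        rwa [hvz2, hwz2, one_smul, zero_smul, zero_add] at h1
      have ha_eq : a = -((a ⬝ᵥ z₁) • v + (b ⬝ᵥ z₁) • w) := by
        rw [eq_neg_iff_add_eq_zero, ← add_assoc]
        exact E1
      have hb_eq : b = -((a ⬝ᵥ z₂) • v + (b ⬝ᵥ z₂) • w) := by
        rw [eq_neg_iff_add_eq_zero, ← add_assoc]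
        rw [show b + (a ⬝ᵥ z₂) • v = (a ⬝ᵥ z₂) • v + b from add_comm _ _]
        exact E2
      have hα : a ⬝ᵥ z₁ = 0 := by
        have h1 := congrArg (fun u => u ⬝ᵥ z₁) E1
        simp only [add_dotProduct, smul_dotProduct, zero_dotProduct, smul_eq_mul,
          hvz1, hwz1, mul_one, mul_zero, add_zero] at h1
        linarith
      have hδ : b ⬝ᵥ z₂ = 0 := by
        have h1 := congrArg (fun u => u ⬝ᵥ z₂) E2
        simp only [add_dotProduct, smul_dotProduct, zero_dotProduct, smul_eq_mul,
          hvz2, hwz2, mul_one, mul_zero, zero_add] at h1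
        linarith
      have hβγ : b ⬝ᵥ z₁ = -(a ⬝ᵥ z₂) := by
        have h1 := congrArg (fun u => u ⬝ᵥ z₁) E2
        simp only [add_dotProduct, smul_dotProduct, zero_dotProduct, smul_eq_mul,
          hvz1, hwz1, mul_one, mul_zero, add_zero] at h1
        linarith
      have ha2 : a = (a ⬝ᵥ z₂) • w := by
        conv_lhs => rw [ha_eq]
        rw [hα, hβγ, zero_smul, zero_add, neg_smul, neg_neg]
      have hb2 : b = -((a ⬝ᵥ z₂) • v) := by
        conv_lhs => rw [hb_eq]
        rw [hδ, zero_smul, add_zero]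
      have hγ0 : (a ⬝ᵥ z₂) ≠ 0 := by
        intro h
        have ha0 : a = 0 := by rw [ha2, h, zero_smul]
        have hdet0 : A.det = 0 := Matrix.exists_mulVec_eq_zero_iff.mp
          ⟨v, hv, by rw [← ha]; exact ha0⟩
        exact hdetA hdet0
      have hsq : 0 < (a ⬝ᵥ z₂)^2 :=
        lt_of_le_of_ne (sq_nonneg _) (Ne.symm (pow_ne_zero 2 hγ0))
      refine ⟨-((a ⬝ᵥ z₂)^2), by linarith, w, hw, ?_⟩
      rw [← Matrix.mulVec_mulVec]
      rw [show B *ᵥ w = -((a ⬝ᵥ z₂) • v) from by rw [← hb]; exact hb2]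
      rw [Matrix.mulVec_neg, Matrix.mulVec_smul]
      rw [show A *ᵥ v = (a ⬝ᵥ z₂) • w from by rw [← ha]; exact ha2]
      rw [smul_smul, ← neg_smul, pow_two]
  · rintro ⟨lam, hlam, x, hx, hABx⟩
    obtain ⟨β, hβpos, hβ2⟩ : ∃ β : ℝ, 0 < β ∧ β^2 = -lam :=
      ⟨Real.sqrt (-lam), Real.sqrt_pos.mpr (by linarith), Real.sq_sqrt (by linarith)⟩
    have hBx : B *ᵥ x ≠ 0 := by
      intro h
      apply hx
      have h1 : (A * B) *ᵥ x = 0 := by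
        rw [← Matrix.mulVec_mulVec, h, Matrix.mulVec_zero]
      rw [hABx] at h1
      rcases smul_eq_zero.mp h1 with h' | h'
      · exact absurd h' (ne_of_lt hlam)
      · exact h'
    refine ⟨(-(β⁻¹)) • (B *ᵥ x), x, ?_, hx, ?_⟩
    · intro h
      rcases smul_eq_zero.mp h with h' | h'
      · simp only [neg_eq_zero, inv_eq_zero] at h'
        exact absurd h' (ne_of_gt hβpos)
      · exact hBx h'
    · set y : Fin n → ℝ := (-(β⁻¹)) • (B *ᵥ x) with hy
      have hlam' : lam = -(β^2) := by linarith
      have hAv : A *ᵥ y = β • x := by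
        rw [hy, Matrix.mulVec_smul, Matrix.mulVec_mulVec, hABx, smul_smul]
        congr 1
        rw [hlam']
        field_simp
      have hBw : B *ᵥ x = (-β) • y := by
        rw [hy, smul_smul]
        rw [show (-β) * (-(β⁻¹)) = β * β⁻¹ by ring, mul_inv_cancel₀ (ne_of_gt hβpos), one_smul]
      rw [RankOneAux.mul_vecMulVec, vecMulVec_mul_transpose, RankOneAux.mul_vecMulVec, vecMulVec_mul_transpose,
        hAv, hBw]
      exact cancel_aux β x y
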